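/- (Main theorem, part 2: right Kan extension property) In the setting of part 1 — categories A, B, C, E; J : A ⥤ B full and faithful with adjunction adj : R ⊣ J, unit β; V : B ⥤ C, P : E ⥤ C, K : A ⥤ E with K ⋙ P = J ⋙ V; K̄ : B ⥤ E with K̄ ⋙ P = V; ϑ : K̄ ⟶ R ⋙ K pointwise P-cartesian over V.map ∘ β; and ι : J ⋙ K̄ ≅ K the natural isomorphism with P-image the identity and K̄.map (β.app X) ≫ ι.hom.app (R.obj X) = ϑ.app X — the following universal property holds: for every functor H : B ⥤ E with H ⋙ P = V and every natural transformation κ : J ⋙ H ⟶ K whose components have P-image the identity (modulo eqToHom), there exists a unique natural transformation κ̄ : H ⟶ K̄ whose components have P-image the identity (modulo eqToHom) and which satisfies whiskerLeft J κ̄ ≫ ι.hom = κ. Thus (K̄, ι) is a right Kan extension of K along J in the 2-category CAT/C. -/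

import Mathlib

open CategoryTheory

universe v₁ v₂ v₃ v₄ u₁ u₂ u₃ u₄

/-- A morphism `φ` in `E` is `P`-cartesian if every `g : L ⟶ N` lying over a factorization
`w ≫ P.map φ = P.map g` factors uniquely through `φ` over `w`. -/
def IsCartesianMor {E : Type u₁} {C : Type u₂} [Category.{v₁} E] [Category.{v₂} C]
    (P : E ⥤ C) {M N : E} (φ : M ⟶ N) : Prop :=
  ∀ {L : E} (g : L ⟶ N) (w : P.obj L ⟶ P.obj M),
    w ≫ P.map φ = P.map g → ∃! t : L ⟶ M, P.map t = w ∧ t ≫ φ = g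

theorem stmt17 {A : Type u₁} {B : Type u₂} {C : Type u₃} {E : Type u₄}
    [Category.{v₁} A] [Category.{v₂} B] [Category.{v₃} C] [Category.{v₄} E]
    (J : A ⥤ B) [J.Full] [J.Faithful] (R : B ⥤ A) (adj : R ⊣ J)
    (V : B ⥤ C) (P : E ⥤ C) (K : A ⥤ E) (hK : K ⋙ P = J ⋙ V)
    (Kbar : B ⥤ E) (hKbar : Kbar ⋙ P = V)
    (ϑ : Kbar ⟶ R ⋙ K)
    (hcart : ∀ X : B, IsCartesianMor P (ϑ.app X))
    (hover : ∀ X : B, P.map (ϑ.app X) =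
      eqToHom (Functor.congr_obj hKbar X) ≫ V.map (adj.unit.app X) ≫
        eqToHom (Functor.congr_obj hK (R.obj X)).symm)
    (ι : J ⋙ Kbar ≅ K)
    (hι : ∀ a : A, P.map (ι.hom.app a) =
      eqToHom ((Functor.congr_obj hKbar (J.obj a)).trans
        (Functor.congr_obj hK a).symm))
    (hιϑ : ∀ X : B, Kbar.map (adj.unit.app X) ≫ ι.hom.app (R.obj X) = ϑ.app X) :
    ∀ (H : B ⥤ E) (hH : H ⋙ P = V) (κ : J ⋙ H ⟶ K),
      (∀ a : A, P.map (κ.app a) =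
        eqToHom ((Functor.congr_obj hH (J.obj a)).trans
          (Functor.congr_obj hK a).symm)) →
      ∃! κbar : H ⟶ Kbar,
        (∀ X : B, P.map (κbar.app X) =
          eqToHom ((Functor.congr_obj hH X).trans
            (Functor.congr_obj hKbar X).symm)) ∧
        Functor.whiskerLeft J κbar ≫ ι.hom = κ := by
  intro H hH κ hκ
  -- P-image of ι.inv
  have hιinv : ∀ a : A, P.map (ι.inv.app a) =
      eqToHom ((Functor.congr_obj hK a).trans
        (Functor.congr_obj hKbar (J.obj a)).symm) := by
    intro a
    have h := congrArg P.map (ι.hom_inv_id_app a)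
    rw [P.map_comp, hι, P.map_id] at h
    rw [← cancel_epi (eqToHom ((Functor.congr_obj hKbar (J.obj a)).trans
        (Functor.congr_obj hK a).symm)), h, eqToHom_trans, eqToHom_refl]
    rfl
  -- the key construction via cartesianness
  have key : ∀ X : B, ∃! t : H.obj X ⟶ Kbar.obj X,
      P.map t = eqToHom ((Functor.congr_obj hH X).trans (Functor.congr_obj hKbar X).symm) ∧
      t ≫ ϑ.app X = H.map (adj.unit.app X) ≫ κ.app (R.obj X) := by
    intro X
    apply hcart X
    have hh := Functor.congr_hom hH (adj.unit.app X)
    simp only [Functor.comp_map] at hh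
    rw [hover, P.map_comp, hκ, hh]
    simp
  choose t ht using key
  have hPt : ∀ X, P.map (t X) = _ := fun X => (ht X).1.1
  have htϑ : ∀ X, t X ≫ ϑ.app X = _ := fun X => (ht X).1.2
  have huniq := fun X => (ht X).2
  -- the unit on the image of J is the image of the inverse counit
  have hβJ : ∀ a : A, adj.unit.app (J.obj a) = J.map (inv (adj.counit.app a)) := by
    intro a
    rw [← cancel_mono (J.map (adj.counit.app a)), ← J.map_comp, IsIso.inv_hom_id, J.map_id]
    exact adj.right_triangle_components a
  -- naturality of t
  have hnat : ∀ {X Y : B} (f : X ⟶ Y), t X ≫ Kbar.map f = H.map f ≫ t Y := by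
    intro X Y f
    have hw : P.map (H.map f ≫ t Y) ≫ P.map (ϑ.app Y) =
        P.map (H.map f ≫ H.map (adj.unit.app Y) ≫ κ.app (R.obj Y)) := by
      rw [P.map_comp, Category.assoc, ← P.map_comp, htϑ Y, ← P.map_comp]
    have hu := hcart Y (H.map f ≫ H.map (adj.unit.app Y) ≫ κ.app (R.obj Y))
      (P.map (H.map f ≫ t Y)) hw
    refine hu.unique ⟨?_, ?_⟩ ⟨rfl, by rw [Category.assoc, htϑ Y]⟩
    · have hh := Functor.congr_hom hH f
      have hk := Functor.congr_hom hKbar f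
      simp only [Functor.comp_map] at hh hk
      rw [P.map_comp, P.map_comp, hPt X, hPt Y, hh, hk]
      simp
    · rw [Category.assoc, ϑ.naturality, ← Category.assoc, htϑ X, Category.assoc]
      have hκnat := κ.naturality (R.map f)
      dsimp at hκnat ⊢
      have hb := adj.unit.naturality f
      simp only [Functor.id_map, Functor.comp_map, Functor.id_obj, Functor.comp_obj] at hb ⊢
      rw [← hκnat, ← Category.assoc, ← H.map_comp, ← hb, H.map_comp, Category.assoc]
  -- the triangle identity for t
  have htri : ∀ a : A, t (J.obj a) = κ.app a ≫ ι.inv.app a := by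
    intro a
    refine (huniq (J.obj a) (κ.app a ≫ ι.inv.app a) ⟨?_, ?_⟩).symm
    · rw [P.map_comp, hκ, hιinv, eqToHom_trans]
    · rw [← hιϑ (J.obj a), hβJ a]
      have hn := ι.inv.naturality (inv (adj.counit.app a))
      dsimp at hn
      have hκn := κ.naturality (inv (adj.counit.app a))
      dsimp at hκn
      calc (κ.app a ≫ ι.inv.app a) ≫ Kbar.map (J.map (inv (adj.counit.app a))) ≫
            ι.hom.app (R.obj (J.obj a))
          = κ.app a ≫ (ι.inv.app a ≫ Kbar.map (J.map (inv (adj.counit.app a)))) ≫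
            ι.hom.app (R.obj (J.obj a)) := by simp
        _ = κ.app a ≫ (K.map (inv (adj.counit.app a)) ≫ ι.inv.app (R.obj (J.obj a))) ≫
            ι.hom.app (R.obj (J.obj a)) := by rw [hn]
        _ = κ.app a ≫ K.map (inv (adj.counit.app a)) := by simp
        _ = H.map (J.map (inv (adj.counit.app a))) ≫ κ.app (R.obj (J.obj a)) := hκn.symm
  refine ⟨⟨t, fun {X Y} f => (hnat f).symm⟩, ⟨fun X => hPt X, ?_⟩, ?_⟩
  · ext a
    dsimp
    rw [htri a, Category.assoc, ι.inv_hom_id_app, Category.comp_id]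
  · rintro κb ⟨h1, h2⟩
    ext X
    dsimp
    refine huniq X (κb.app X) ⟨h1 X, ?_⟩
    have hb := κb.naturality (adj.unit.app X)
    simp only [Functor.id_map, Functor.comp_map, Functor.id_obj, Functor.comp_obj] at hb ⊢
    rw [← hιϑ X, ← Category.assoc, ← hb, Category.assoc]
    congr 1
    exact congrArg (fun τ => τ.app (R.obj X)) h2
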